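/- For 0 < a and 0 < b with a + b < 2, define h = √(1 − (a/2)²) − √(1 − ((a+b)/2)²), α = 2·arcsin((a+b)/2), β = arccos(1 − ((b/2)² + h²)/2), γ = 2·arcsin(a/2), S₁ = (b·h)/2 + (β − sin β) + (γ − sin γ)/2, and S₂ = (1/2 − ab/(a+b)²)·(α − sin α). Then for a = b (with 0 < a < 1), S₂ > S₁. -/

import Mathlib

open Real

noncomputable def curveH (a b : ℝ) : ℝ :=
  Real.sqrt (1 - (a / 2) ^ 2) - Real.sqrt (1 - ((a + b) / 2) ^ 2)

noncomputable def curveS₁ (a b : ℝ) : ℝ :=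
  b * curveH a b / 2
    + (Real.arccos (1 - ((b / 2) ^ 2 + (curveH a b) ^ 2) / 2)
        - Real.sin (Real.arccos (1 - ((b / 2) ^ 2 + (curveH a b) ^ 2) / 2)))
    + (2 * Real.arcsin (a / 2) - Real.sin (2 * Real.arcsin (a / 2))) / 2

noncomputable def curveS₂ (a b : ℝ) : ℝ :=
  (1 / 2 - a * b / (a + b) ^ 2)
    * (2 * Real.arcsin ((a + b) / 2) - Real.sin (2 * Real.arcsin ((a + b) / 2)))

/-- Key analytic inequality: `F s = s (2√(1 - (s/2)²) - √(1 - s²)) - arcsin s > 0` on `(0,1)`,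
proved by showing `F 0 = 0` and `F' s = (2 - s²)/√(1 - (s/2)²) - 2√(1 - s²) > 0`. -/
lemma Fkey (a : ℝ) (ha : 0 < a) (ha1 : a < 1) :
    0 < a * (2 * Real.sqrt (1 - (a/2)^2) - Real.sqrt (1 - a^2)) - Real.arcsin a := by
  set F : ℝ → ℝ := fun x => x * (2 * Real.sqrt (1 - (x/2)^2) - Real.sqrt (1 - x^2)) - Real.arcsin x with hF
  have hmono : StrictMonoOn F (Set.Icc 0 a) := by
    apply strictMonoOn_of_deriv_pos (convex_Icc 0 a)
    · apply ContinuousOn.sub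
      · exact (continuousOn_id.mul (((continuous_const.mul ((continuous_const.sub ((continuous_id.div_const 2).pow 2)).sqrt)).sub ((continuous_const.sub (continuous_id.pow 2)).sqrt)).continuousOn))
      · exact Real.continuous_arcsin.continuousOn
    · intro x hx
      rw [interior_Icc] at hx
      obtain ⟨hx0, hxa⟩ := hx
      have hx1 : x < 1 := hxa.trans ha1
      have hq2 : (0:ℝ) < 1 - x^2 := by nlinarith
      have hp2 : (0:ℝ) < 1 - (x/2)^2 := by nlinarith
      have hq : 0 < Real.sqrt (1 - x^2) := Real.sqrt_pos.mpr hq2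
      have hp : 0 < Real.sqrt (1 - (x/2)^2) := Real.sqrt_pos.mpr hp2
      set p := Real.sqrt (1 - (x/2)^2)
      set q := Real.sqrt (1 - x^2)
      have hpe : p^2 = 1 - (x/2)^2 := Real.sq_sqrt hp2.le
      have hqe : q^2 = 1 - x^2 := Real.sq_sqrt hq2.le
      have d1 : HasDerivAt (fun y : ℝ => 1 - (y/2)^2) (-(x/2)) x := by
        have h := (((hasDerivAt_id x).div_const 2).pow 2).const_sub 1
        refine h.congr_deriv ?_
        simp only [id_eq]
        push_cast
        ring
      have d2 : HasDerivAt (fun y : ℝ => 1 - y^2) (-(2*x)) x := by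
        have h := ((hasDerivAt_id x).pow 2).const_sub 1
        refine h.congr_deriv ?_
        simp only [id_eq]
        push_cast
        ring
      have dp : HasDerivAt (fun y : ℝ => Real.sqrt (1 - (y/2)^2)) ((-(x/2)) / (2 * p)) x :=
        d1.sqrt (by positivity)
      have dq : HasDerivAt (fun y : ℝ => Real.sqrt (1 - y^2)) ((-(2*x)) / (2 * q)) x :=
        d2.sqrt (by positivity)
      have da : HasDerivAt Real.arcsin (1 / Real.sqrt (1 - x^2)) x :=
        Real.hasDerivAt_arcsin (by linarith) (by linarith)
      have dF : HasDerivAt F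
          (1 * (2 * p - q) + x * (2 * ((-(x/2)) / (2 * p)) - (-(2*x)) / (2 * q)) - 1 / q) x :=
        ((hasDerivAt_id x).mul ((dp.const_mul 2).sub dq)).sub da
      rw [dF.deriv]
      have key : 2 * (p * q) < 2 - x^2 := by
        nlinarith [mul_pos hp hq, sq_nonneg (p*q - (2 - x^2)/2), sq_nonneg x]
      have heq : (1 * (2 * p - q) + x * (2 * ((-(x/2)) / (2 * p)) - (-(2*x)) / (2 * q)) - 1 / q) = ((2 - x^2) - 2*(p*q)) / p := by
        field_simp
        linear_combination 4*q * hpe + 2*p * hqe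
      rw [heq]
      exact div_pos (by linarith) hp
  have h0 : F 0 = 0 := by simp [hF]
  have hlt := hmono (Set.left_mem_Icc.mpr ha.le) (Set.right_mem_Icc.mpr ha.le) ha
  rw [h0] at hlt
  have hFa : F a = a * (2 * Real.sqrt (1 - (a/2)^2) - Real.sqrt (1 - a^2)) - Real.arcsin a := rfl
  linarith [hFa ▸ hlt]

theorem curving_equal_sides_radius_half_better (a : ℝ) (ha : 0 < a) (ha1 : a < 1) :
    curveS₂ a a > curveS₁ a a := by
  have haa : (a + a)/2 = a := by ring
  have hp2 : (0:ℝ) ≤ 1 - (a/2)^2 := by nlinarith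
  have hq2 : (0:ℝ) ≤ 1 - a^2 := by nlinarith
  set p := Real.sqrt (1 - (a/2)^2) with hpdef
  set q := Real.sqrt (1 - a^2) with hqdef
  have hpe : p^2 = 1 - (a/2)^2 := Real.sq_sqrt hp2
  have hqe : q^2 = 1 - a^2 := Real.sq_sqrt hq2
  have hcosθ : Real.cos (Real.arcsin (a/2)) = p := by rw [Real.cos_arcsin]
  have hcosφ : Real.cos (Real.arcsin a) = q := by rw [Real.cos_arcsin]
  have hsinθ : Real.sin (Real.arcsin (a/2)) = a/2 := Real.sin_arcsin (by linarith) (by linarith)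
  have hsinφ : Real.sin (Real.arcsin a) = a := Real.sin_arcsin (by linarith) (by linarith)
  have hH : curveH a a = p - q := by rw [curveH, haa]
  have hc : 1 - ((a/2)^2 + (p - q)^2)/2 = Real.cos (Real.arcsin a - Real.arcsin (a/2)) := by
    rw [Real.cos_sub, hcosθ, hcosφ, hsinθ, hsinφ]
    linear_combination (-(1:ℝ)/2)*hpe + (-(1:ℝ)/2)*hqe
  have hβ : Real.arccos (1 - ((a/2)^2 + (p - q)^2)/2) = Real.arcsin a - Real.arcsin (a/2) := by
    rw [hc, Real.arccos_cos]
    · exact sub_nonneg.mpr (Real.monotone_arcsin (by linarith))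
    · have h1 := Real.arcsin_le_pi_div_two a
      have h2 : 0 ≤ Real.arcsin (a/2) := Real.arcsin_nonneg.mpr (by linarith)
      have := Real.pi_pos
      linarith
  have hsinβ : Real.sin (Real.arcsin a - Real.arcsin (a/2)) = a * p - q * (a/2) := by
    rw [Real.sin_sub, hcosθ, hcosφ, hsinθ, hsinφ]
  have hsin2θ : Real.sin (2 * Real.arcsin (a/2)) = 2 * (a/2) * p := by
    rw [Real.sin_two_mul, hsinθ, hcosθ]
  have hsin2φ : Real.sin (2 * Real.arcsin a) = 2 * a * q := by
    rw [Real.sin_two_mul, hsinφ, hcosφ]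
  have hquarter : a * a / (a + a)^2 = 1/4 := by
    field_simp
    ring
  rw [gt_iff_lt, curveS₁, curveS₂, hH, haa, hquarter, hβ, hsinβ, hsin2θ, hsin2φ]
  have := Fkey a ha ha1
  nlinarith [this]
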